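/- Let μ be an unconditional log-concave measure on R^n, K a symmetric convex body, and u a standard basis vector. Then μ((S_u K)^o) ≥ μ(K^o). -/

import Mathlib

open MeasureTheory Set Pointwise
open scoped InnerProductSpace ENNReal

noncomputable section

/-- Abstract midpoint Prékopa–Leindler property for a measure. -/
def MidPL {α : Type*} [MeasurableSpace α] (μ : Measure α) (mid : α → α → α) : Prop :=
  ∀ f g h : α → ℝ≥0∞, Measurable f → Measurable g → Measurable h →
    (∀ x y, f x * g y ≤ h (mid x y) ^ 2) →
    (∫⁻ x, f x ∂μ) * (∫⁻ x, g x ∂μ) ≤ (∫⁻ x, h x ∂μ) ^ 2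

/-- layer cake for ennreal valued functions -/
lemma layercake_ennreal {α : Type*} [MeasurableSpace α] (μ : Measure α) [SFinite μ]
    (F : α → ℝ≥0∞) (hF : Measurable F) :
    ∫⁻ a, F a ∂μ = ∫⁻ t in Set.Ioi (0:ℝ), μ {a | ENNReal.ofReal t < F a} := by
  have hSm : MeasurableSet {p : ℝ × α | ENNReal.ofReal p.1 < F p.2} :=
    measurableSet_lt (ENNReal.measurable_ofReal.comp measurable_fst) (hF.comp measurable_snd)
  set φ : ℝ × α → ℝ≥0∞ :=
    Set.indicator {p : ℝ × α | ENNReal.ofReal p.1 < F p.2} (fun _ => (1 : ℝ≥0∞)) with hφ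
  have hφm : Measurable φ := measurable_const.indicator hSm
  have step1 : ∀ t : ℝ, μ {a | ENNReal.ofReal t < F a} = ∫⁻ a, φ (t, a) ∂μ := by
    intro t
    have hmt : MeasurableSet {a | ENNReal.ofReal t < F a} :=
      measurableSet_lt measurable_const hF
    rw [← lintegral_indicator_one hmt]
    apply lintegral_congr
    intro a
    simp [hφ, Set.indicator_apply]
  have step2 : ∀ a : α, (∫⁻ t in Set.Ioi (0:ℝ), φ (t, a)) = F a := by
    intro a
    have h1 : ∀ t : ℝ, φ (t, a)
        = Set.indicator {t : ℝ | ENNReal.ofReal t < F a} (1 : ℝ → ℝ≥0∞) t := by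
      intro t; simp [hφ, Set.indicator_apply]
    have hmt : MeasurableSet {t : ℝ | ENNReal.ofReal t < F a} :=
      measurableSet_lt ENNReal.measurable_ofReal measurable_const
    simp_rw [h1]
    rw [lintegral_indicator_one hmt, Measure.restrict_apply hmt]
    rcases eq_or_ne (F a) ∞ with hc | hc
    · have : {t : ℝ | ENNReal.ofReal t < F a} ∩ Set.Ioi 0 = Set.Ioi 0 := by
        ext t; simp [hc, ENNReal.ofReal_lt_top]
      rw [this, Real.volume_Ioi, hc]
    · have : {t : ℝ | ENNReal.ofReal t < F a} ∩ Set.Ioi 0 = Set.Ioo 0 ((F a).toReal) := by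
        ext t
        simp only [Set.mem_inter_iff, Set.mem_setOf_eq, Set.mem_Ioi, Set.mem_Ioo]
        constructor
        · rintro ⟨h1, h2⟩
          exact ⟨h2, (ENNReal.ofReal_lt_iff_lt_toReal h2.le hc).mp h1⟩
        · rintro ⟨h1, h2⟩
          exact ⟨(ENNReal.ofReal_lt_iff_lt_toReal h1.le hc).mpr h2, h1⟩
      rw [this, Real.volume_Ioo, sub_zero, ENNReal.ofReal_toReal hc]
  calc ∫⁻ a, F a ∂μ = ∫⁻ a, ∫⁻ t in Set.Ioi (0:ℝ), φ (t, a) ∂volume ∂μ := by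
        apply lintegral_congr; intro a; rw [step2]
    _ = ∫⁻ t in Set.Ioi (0:ℝ), ∫⁻ a, φ (t, a) ∂μ := by
        exact lintegral_lintegral_swap (f := fun a t => φ (t, a))
          (Measurable.aemeasurable (by exact hφm.comp measurable_swap))
    _ = ∫⁻ t in Set.Ioi (0:ℝ), μ {a | ENNReal.ofReal t < F a} := by
        apply lintegral_congr; intro t; rw [step1]

lemma half_image_volume (A : Set ℝ) (c : ℝ) :
    volume ((fun x => (x + c) / 2) '' A) = volume A / 2 := by
  have himg : (fun x => (x + c) / 2) '' A = (c / 2) +ᵥ ((2⁻¹ : ℝ) • A) := by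
    ext z
    simp only [Set.mem_image, Set.mem_vadd_set, Set.mem_smul_set]
    constructor
    · rintro ⟨x, hx, rfl⟩
      refine ⟨2⁻¹ * x, ⟨x, hx, rfl⟩, ?_⟩
      simp only [vadd_eq_add, smul_eq_mul]; ring
    · rintro ⟨y, ⟨x, hx, rfl⟩, rfl⟩
      refine ⟨x, hx, ?_⟩
      simp only [vadd_eq_add, smul_eq_mul]; ring
  rw [himg, measure_vadd, Measure.addHaar_smul volume, Module.finrank_self, pow_one,
    abs_of_pos (by norm_num : (0:ℝ) < 2⁻¹)]
  rw [ENNReal.ofReal_inv_of_pos (by norm_num : (0:ℝ) < 2)]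
  norm_num [ENNReal.div_eq_inv_mul]

/-- 1-d sumset measure bound -/
lemma key1d {A B S : Set ℝ} (hA : MeasurableSet A) (hB : MeasurableSet B) (hS : MeasurableSet S)
    (hAne : A.Nonempty) (hBne : B.Nonempty)
    (hsub : ∀ x ∈ A, ∀ y ∈ B, (x + y) / 2 ∈ S) :
    volume A / 2 + volume B / 2 ≤ volume S := by
  have claim : ∀ K₁ K₂ : Set ℝ, IsCompact K₁ → K₁ ⊆ A → IsCompact K₂ → K₂ ⊆ B →
      volume K₁ + volume K₂ ≤ 2 * volume S := by
    intro K₁ K₂ hc1 hs1 hc2 hs2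
    rcases K₁.eq_empty_or_nonempty with rfl | hne1
    · obtain ⟨a₀, ha₀⟩ := hAne
      have hsubT : (fun y => (y + a₀) / 2) '' K₂ ⊆ S := by
        rintro _ ⟨y, hy, rfl⟩
        show (y + a₀) / 2 ∈ S
        rw [show (y + a₀) / 2 = (a₀ + y) / 2 by ring]
        exact hsub a₀ ha₀ y (hs2 hy)
      have := measure_mono (μ := volume) hsubT
      rw [half_image_volume] at this
      calc volume (∅ : Set ℝ) + volume K₂ = 2 * (volume K₂ / 2) := by
            rw [measure_empty, zero_add, ENNReal.mul_div_cancel' (by norm_num) (by norm_num)]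
        _ ≤ 2 * volume S := by exact mul_le_mul_right this 2
    rcases K₂.eq_empty_or_nonempty with rfl | hne2
    · obtain ⟨b₀, hb₀⟩ := hBne
      have hsubT : (fun x => (x + b₀) / 2) '' K₁ ⊆ S := by
        rintro _ ⟨x, hx, rfl⟩
        exact hsub x (hs1 hx) b₀ hb₀
      have := measure_mono (μ := volume) hsubT
      rw [half_image_volume] at this
      calc volume K₁ + volume (∅ : Set ℝ) = 2 * (volume K₁ / 2) := by
            rw [measure_empty, add_zero, ENNReal.mul_div_cancel' (by norm_num) (by norm_num)]
        _ ≤ 2 * volume S := by exact mul_le_mul_right this 2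
    · set a : ℝ := sSup K₁ with ha
      set b : ℝ := sInf K₂ with hb
      have haK : a ∈ K₁ := hc1.sSup_mem hne1
      have hbK : b ∈ K₂ := hc2.sInf_mem hne2
      set P : Set ℝ := (fun x => (x + b) / 2) '' K₁ with hP
      set Q : Set ℝ := (fun y => (y + a) / 2) '' K₂ with hQ
      have hPS : P ⊆ S := by rintro _ ⟨x, hx, rfl⟩; exact hsub x (hs1 hx) b (hs2 hbK)
      have hQS : Q ⊆ S := by
        rintro _ ⟨y, hy, rfl⟩
        show (y + a) / 2 ∈ S
        rw [show (y + a) / 2 = (a + y) / 2 by ring]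
        exact hsub a (hs1 haK) y (hs2 hy)
      have hQm : MeasurableSet Q :=
        ((hc2.image (by continuity)).isClosed).measurableSet
      have hinter : P ∩ Q ⊆ {(a + b) / 2} := by
        rintro z ⟨⟨x, hx, rfl⟩, ⟨y, hy, hyz⟩⟩
        have hxa : x ≤ a := le_csSup hc1.bddAbove hx
        have hby : b ≤ y := csInf_le hc2.bddBelow hy
        have hxy : x + b = y + a := by
          field_simp at hyz; linarith
        have hxa' : x = a := by linarith
        simp [Set.mem_singleton_iff, hxa']
      have key : volume P + volume Q ≤ volume S := by
        have h1 : volume (P ∪ Q) + volume (P ∩ Q) = volume P + volume Q :=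
          measure_union_add_inter P hQm
        have h2 : volume (P ∩ Q) = 0 :=
          le_antisymm (le_trans (measure_mono hinter) (by simp)) zero_le
        rw [h2, add_zero] at h1
        rw [← h1]
        exact measure_mono (Set.union_subset hPS hQS)
      have hvP : volume P = volume K₁ / 2 := half_image_volume K₁ b
      have hvQ : volume Q = volume K₂ / 2 := half_image_volume K₂ a
      calc volume K₁ + volume K₂
          = 2 * (volume K₁ / 2 + volume K₂ / 2) := by
            rw [mul_add, ENNReal.mul_div_cancel' (by norm_num) (by norm_num),
              ENNReal.mul_div_cancel' (by norm_num) (by norm_num)]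
        _ = 2 * (volume P + volume Q) := by rw [hvP, hvQ]
        _ ≤ 2 * volume S := mul_le_mul_right key 2
  have hA' : volume A = ⨆ K : {K : Set ℝ // IsCompact K ∧ K ⊆ A}, volume K.1 := by
    rw [hA.measure_eq_iSup_isCompact]
    apply le_antisymm
    · exact iSup_le fun K => iSup_le fun h1 => iSup_le fun h2 =>
        le_iSup (fun x : {K : Set ℝ // IsCompact K ∧ K ⊆ A} => volume x.1) ⟨K, h2, h1⟩
    · exact iSup_le fun x => le_iSup_of_le x.1 (le_iSup_of_le x.2.2 (le_iSup_of_le x.2.1 le_rfl))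
  have hB' : volume B = ⨆ K : {K : Set ℝ // IsCompact K ∧ K ⊆ B}, volume K.1 := by
    rw [hB.measure_eq_iSup_isCompact]
    apply le_antisymm
    · exact iSup_le fun K => iSup_le fun h1 => iSup_le fun h2 =>
        le_iSup (fun x : {K : Set ℝ // IsCompact K ∧ K ⊆ B} => volume x.1) ⟨K, h2, h1⟩
    · exact iSup_le fun x => le_iSup_of_le x.1 (le_iSup_of_le x.2.2 (le_iSup_of_le x.2.1 le_rfl))
  have hsum : volume A + volume B ≤ 2 * volume S := by
    rw [hA', hB']
    have : Nonempty {K : Set ℝ // IsCompact K ∧ K ⊆ A} := ⟨⟨∅, isCompact_empty, Set.empty_subset _⟩⟩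
    have : Nonempty {K : Set ℝ // IsCompact K ∧ K ⊆ B} := ⟨⟨∅, isCompact_empty, Set.empty_subset _⟩⟩
    exact ENNReal.iSup_add_iSup_le fun i j => claim i.1 j.1 i.2.1 i.2.2 j.2.1 j.2.2
  calc volume A / 2 + volume B / 2 = (volume A + volume B) / 2 := by
        rw [ENNReal.add_div]
    _ ≤ 2 * volume S / 2 := ENNReal.div_le_div_right hsum 2
    _ = volume S := by
        rw [div_eq_mul_inv, mul_assoc, ← div_eq_mul_inv]
        exact ENNReal.mul_div_cancel' (by norm_num) (by norm_num)


lemma ennreal_amgm (a b : ℝ≥0∞) : a * b ≤ (a / 2 + b / 2) ^ 2 := by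
  rcases eq_or_ne a ∞ with rfl | ha
  · have h2 : (∞ : ℝ≥0∞) / 2 + b / 2 = ∞ := by
      rw [ENNReal.top_div_of_lt_top (by norm_num), top_add]
    rw [h2, ENNReal.top_pow (by norm_num)]
    exact le_top
  rcases eq_or_ne b ∞ with rfl | hb
  · have h2 : a / 2 + (∞ : ℝ≥0∞) / 2 = ∞ := by
      rw [ENNReal.top_div_of_lt_top (by norm_num), add_top]
    rw [h2, ENNReal.top_pow (by norm_num)]
    exact le_top
  · have hfin : (a / 2 + b / 2) ≠ ∞ := by
      simp [ENNReal.add_ne_top, ENNReal.div_eq_top, ha, hb]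
    rw [← ENNReal.toReal_le_toReal (by simp [ENNReal.mul_ne_top, ha, hb]) (by
      simp [ENNReal.pow_eq_top_iff, hfin])]
    rw [ENNReal.toReal_mul, ENNReal.toReal_pow, ENNReal.toReal_add
      (by simp [ENNReal.div_eq_top, ha]) (by simp [ENNReal.div_eq_top, hb]),
      ENNReal.toReal_div, ENNReal.toReal_div]
    have ha' : 0 ≤ a.toReal := ENNReal.toReal_nonneg
    have hb' : 0 ≤ b.toReal := ENNReal.toReal_nonneg
    have : (0:ℝ) ≤ (a.toReal - b.toReal)^2 := sq_nonneg _
    norm_num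
    nlinarith

/-- positive measure of superlevel sets below the essential supremum -/
lemma pos_meas_of_lt_essSup {F : ℝ → ℝ≥0∞} {s : ℝ≥0∞}
    (hs : s < essSup F (volume : Measure ℝ)) : 0 < volume {x | s < F x} := by
  by_contra hcon
  push_neg at hcon
  have h0 : volume {x | s < F x} = 0 := le_antisymm hcon zero_le
  have : essSup F (volume : Measure ℝ) ≤ s :=
    essSup_le_of_ae_le s (ae_iff.mpr (by simpa [not_le] using h0))
  exact absurd hs (not_lt.mpr this)

/-- core 1d inequality in the normalized case -/
lemma midPL_real_core (F G h : ℝ → ℝ≥0∞) (hF : Measurable F) (hG : Measurable G)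
    (hh : Measurable h)
    (hyp : ∀ x y, F x * G y ≤ h ((x + y) / 2) ^ 2)
    (hMeq : essSup F (volume : Measure ℝ) = essSup G (volume : Measure ℝ))
    (hM0 : essSup F (volume : Measure ℝ) ≠ 0) (hMtop : essSup F (volume : Measure ℝ) ≠ ∞) :
    (∫⁻ x, F x) * (∫⁻ x, G x) ≤ (∫⁻ x, h x) ^ 2 := by
  set M := essSup F (volume : Measure ℝ) with hM
  set Mr := M.toReal with hMr
  have hMrpos : 0 < Mr := ENNReal.toReal_pos hM0 hMtop
  -- superlevel measure functions
  set VF : ℝ → ℝ≥0∞ := fun t => volume {x | ENNReal.ofReal t < F x} with hVF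
  set VG : ℝ → ℝ≥0∞ := fun t => volume {x | ENNReal.ofReal t < G x} with hVG
  set Vh : ℝ → ℝ≥0∞ := fun t => volume {x | ENNReal.ofReal t < h x} with hVh
  have hVFmeas : Measurable VF := by
    apply Antitone.measurable
    intro t₁ t₂ hle
    exact measure_mono (fun x hx => lt_of_le_of_lt (ENNReal.ofReal_le_ofReal hle) hx)
  have hVGmeas : Measurable VG := by
    apply Antitone.measurable
    intro t₁ t₂ hle
    exact measure_mono (fun x hx => lt_of_le_of_lt (ENNReal.ofReal_le_ofReal hle) hx)
  -- vanishing above Mr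
  have hzeroF : ∀ t : ℝ, Mr ≤ t → VF t = 0 := by
    intro t ht
    have hle : M ≤ ENNReal.ofReal t := by
      rw [← ENNReal.ofReal_toReal hMtop]
      exact ENNReal.ofReal_le_ofReal ht
    have hae : ∀ᵐ x ∂(volume : Measure ℝ), F x ≤ M := ENNReal.ae_le_essSup F
    have hsub : {x | ENNReal.ofReal t < F x} ⊆ {x | ¬ (F x ≤ M)} := by
      intro x hx
      simp only [Set.mem_setOf_eq, not_le] at *
      exact lt_of_le_of_lt hle hx
    exact measure_mono_null hsub (ae_iff.mp hae)
  have hzeroG : ∀ t : ℝ, Mr ≤ t → VG t = 0 := by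
    intro t ht
    have hle : M ≤ ENNReal.ofReal t := by
      rw [← ENNReal.ofReal_toReal hMtop]
      exact ENNReal.ofReal_le_ofReal ht
    have hae : ∀ᵐ x ∂(volume : Measure ℝ), G x ≤ M := hMeq ▸ ENNReal.ae_le_essSup G
    have hsub : {x | ENNReal.ofReal t < G x} ⊆ {x | ¬ (G x ≤ M)} := by
      intro x hx
      simp only [Set.mem_setOf_eq, not_le] at *
      exact lt_of_le_of_lt hle hx
    exact measure_mono_null hsub (ae_iff.mp hae)
  -- key pointwise inequality on (0, Mr)
  have hkey : ∀ t ∈ Set.Ioo (0:ℝ) Mr, VF t / 2 + VG t / 2 ≤ Vh t := by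
    intro t ht
    have hsF : ENNReal.ofReal t < M := by
      rw [← ENNReal.ofReal_toReal hMtop]
      exact (ENNReal.ofReal_lt_ofReal_iff hMrpos).mpr ht.2
    have hposF : 0 < VF t := pos_meas_of_lt_essSup hsF
    have hposG : 0 < VG t := pos_meas_of_lt_essSup (hMeq ▸ hsF)
    set st := ENNReal.ofReal t with hst
    have hsub : ∀ x ∈ {x | st < F x}, ∀ y ∈ {y | st < G y}, (x + y) / 2 ∈ {z | st < h z} := by
      intro x hx y hy
      simp only [Set.mem_setOf_eq] at *
      have h1 : st * st < F x * G y := ENNReal.mul_lt_mul hx hy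
      have h2 : st * st < h ((x + y) / 2) ^ 2 := lt_of_lt_of_le h1 (hyp x y)
      by_contra hcon
      push_neg at hcon
      have : h ((x + y) / 2) ^ 2 ≤ st * st := by
        rw [pow_two]
        exact mul_le_mul' hcon hcon
      exact absurd h2 (not_lt.mpr this)
    exact key1d (measurableSet_lt measurable_const hF)
      (measurableSet_lt measurable_const hG) (measurableSet_lt measurable_const hh)
      (nonempty_of_measure_ne_zero hposF.ne') (nonempty_of_measure_ne_zero hposG.ne') hsub
  -- decompose the domain of the layer-cake integrals
  have hIoi : Set.Ioi (0:ℝ) = Set.Ioo 0 Mr ∪ Set.Ici Mr := by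
    ext x
    simp only [Set.mem_Ioi, Set.mem_union, Set.mem_Ioo, Set.mem_Ici]
    constructor
    · intro hx
      rcases lt_or_ge x Mr with hlt | hge
      · exact Or.inl ⟨hx, hlt⟩
      · exact Or.inr hge
    · rintro (⟨h1, _⟩ | h1)
      · exact h1
      · linarith
  have hdisj : Disjoint (Set.Ioo (0:ℝ) Mr) (Set.Ici Mr) := by
    rw [Set.disjoint_left]
    rintro x ⟨_, h2⟩ h3
    simp only [Set.mem_Ici] at h3
    linarith
  have repF : ∫⁻ x, F x = ∫⁻ t in Set.Ioo (0:ℝ) Mr, VF t := by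
    rw [layercake_ennreal volume F hF]
    show ∫⁻ t in Set.Ioi (0:ℝ), VF t = _
    rw [hIoi, lintegral_union measurableSet_Ici hdisj]
    have : ∫⁻ t in Set.Ici Mr, VF t = 0 := by
      rw [setLIntegral_congr_fun measurableSet_Ici
        (fun t (ht : t ∈ Set.Ici Mr) => hzeroF t ht)]
      exact lintegral_zero
    rw [this, add_zero]
  have repG : ∫⁻ x, G x = ∫⁻ t in Set.Ioo (0:ℝ) Mr, VG t := by
    rw [layercake_ennreal volume G hG]
    show ∫⁻ t in Set.Ioi (0:ℝ), VG t = _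
    rw [hIoi, lintegral_union measurableSet_Ici hdisj]
    have : ∫⁻ t in Set.Ici Mr, VG t = 0 := by
      rw [setLIntegral_congr_fun measurableSet_Ici
        (fun t (ht : t ∈ Set.Ici Mr) => hzeroG t ht)]
      exact lintegral_zero
    rw [this, add_zero]
  have hbound : (∫⁻ x, F x) / 2 + (∫⁻ x, G x) / 2 ≤ ∫⁻ x, h x := by
    have step1 : ∫⁻ t in Set.Ioo (0:ℝ) Mr, Vh t ≤ ∫⁻ x, h x := by
      rw [layercake_ennreal volume h hh]
      exact lintegral_mono' (Measure.restrict_mono (fun x hx => hx.1) le_rfl) le_rfl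
    have step2 : ∫⁻ t in Set.Ioo (0:ℝ) Mr, (VF t / 2 + VG t / 2)
        ≤ ∫⁻ t in Set.Ioo (0:ℝ) Mr, Vh t :=
      setLIntegral_mono' measurableSet_Ioo hkey
    have step3 : ∫⁻ t in Set.Ioo (0:ℝ) Mr, (VF t / 2 + VG t / 2)
        = (∫⁻ t in Set.Ioo (0:ℝ) Mr, VF t) / 2 + (∫⁻ t in Set.Ioo (0:ℝ) Mr, VG t) / 2 := by
      rw [lintegral_add_left (by exact hVFmeas.div_const 2)]
      simp_rw [div_eq_mul_inv, mul_comm _ (2⁻¹ : ℝ≥0∞)]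
      rw [lintegral_const_mul 2⁻¹ hVFmeas, lintegral_const_mul 2⁻¹ hVGmeas]
    rw [repF, repG, ← step3]
    exact le_trans step2 step1
  calc (∫⁻ x, F x) * (∫⁻ x, G x)
      ≤ ((∫⁻ x, F x) / 2 + (∫⁻ x, G x) / 2) ^ 2 := ennreal_amgm _ _
    _ ≤ (∫⁻ x, h x) ^ 2 := by
        rw [pow_two, pow_two]
        exact mul_le_mul' hbound hbound

/-- the unbounded case -/
lemma midPL_real_top (F G h : ℝ → ℝ≥0∞) (hF : Measurable F) (hG : Measurable G)
    (hh : Measurable h)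
    (hyp : ∀ x y, F x * G y ≤ h ((x + y) / 2) ^ 2)
    (hFtop : essSup F (volume : Measure ℝ) = ∞) (hG0 : (∫⁻ x, G x) ≠ 0) :
    (∫⁻ x, h x) = ∞ := by
  have hMg0 : essSup G (volume : Measure ℝ) ≠ 0 := by
    intro hcon
    apply hG0
    rw [lintegral_congr_ae (ENNReal.essSup_eq_zero_iff.mp hcon)]
    exact lintegral_zero
  set Mg := essSup G (volume : Measure ℝ) with hMg
  set s : ℝ≥0∞ := if Mg = ∞ then 1 else Mg / 2 with hs
  have hs0 : s ≠ 0 := by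
    rw [hs]
    split_ifs with hcase
    · exact one_ne_zero
    · simp only [ne_eq, ENNReal.div_eq_zero_iff]
      push_neg
      exact ⟨hMg0, by norm_num⟩
  have hstop : s ≠ ∞ := by
    rw [hs]
    split_ifs with hcase
    · exact ENNReal.one_ne_top
    · exact (ENNReal.div_lt_top hcase (by norm_num)).ne
  have hslt : s < Mg := by
    rw [hs]
    split_ifs with hcase
    · rw [hcase]; exact ENNReal.one_lt_top
    · exact ENNReal.half_lt_self hMg0 hcase
  have hε : 0 < volume {y | s < G y} := pos_meas_of_lt_essSup hslt
  set ε := volume {y | s < G y} with hεdef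
  have main : ∀ n : ℕ, (n : ℝ≥0∞) * (ε / 2) ≤ ∫⁻ x, h x := by
    intro n
    set M : ℝ≥0∞ := (n : ℝ≥0∞) ^ 2 * s⁻¹ with hMdef
    have hMne : M ≠ ∞ :=
      ENNReal.mul_ne_top (ENNReal.pow_ne_top (ENNReal.natCast_ne_top n))
        (ENNReal.inv_ne_top.mpr hs0)
    have hMlt : M < essSup F (volume : Measure ℝ) := by
      rw [hFtop]; exact lt_top_iff_ne_top.mpr hMne
    have hposF : 0 < volume {x | M < F x} := pos_meas_of_lt_essSup hMlt
    have hMs : M * s = (n : ℝ≥0∞) ^ 2 := by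
      rw [hMdef, mul_assoc, ENNReal.inv_mul_cancel hs0 hstop, mul_one]
    have hsub : ∀ x ∈ {x | M < F x}, ∀ y ∈ {y | s < G y},
        (x + y) / 2 ∈ {z | (n : ℝ≥0∞) < h z} := by
      intro x hx y hy
      simp only [Set.mem_setOf_eq] at *
      have h1 : M * s < F x * G y := ENNReal.mul_lt_mul hx hy
      have h2 : (n : ℝ≥0∞) ^ 2 < h ((x + y) / 2) ^ 2 := by
        rw [← hMs]
        exact lt_of_lt_of_le h1 (hyp x y)
      by_contra hcon
      push_neg at hcon
      have : h ((x + y) / 2) ^ 2 ≤ (n : ℝ≥0∞) ^ 2 := by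
        rw [pow_two, pow_two]; exact mul_le_mul' hcon hcon
      exact absurd h2 (not_lt.mpr this)
    have hkey := key1d (measurableSet_lt measurable_const hF)
      (measurableSet_lt measurable_const hG) (measurableSet_lt measurable_const hh)
      (nonempty_of_measure_ne_zero hposF.ne') (nonempty_of_measure_ne_zero hε.ne') hsub
    have hεle : ε / 2 ≤ volume {z | (n : ℝ≥0∞) < h z} :=
      le_trans (le_add_self) hkey
    calc (n : ℝ≥0∞) * (ε / 2) ≤ (n : ℝ≥0∞) * volume {z | (n : ℝ≥0∞) < h z} :=
          mul_le_mul_right hεle _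
      _ ≤ (n : ℝ≥0∞) * volume {z | (n : ℝ≥0∞) ≤ h z} :=
          mul_le_mul_right (measure_mono (fun z (hz : (n : ℝ≥0∞) < h z) => le_of_lt hz)) _
      _ ≤ ∫⁻ x, h x := mul_meas_ge_le_lintegral hh _
  have hne : ε / 2 ≠ 0 := by
    simp only [ne_eq, ENNReal.div_eq_zero_iff]
    push_neg
    exact ⟨hε.ne', by norm_num⟩
  rw [← top_le_iff]
  calc (∞ : ℝ≥0∞) = ∞ * (ε / 2) := (ENNReal.top_mul hne).symm
    _ = (⨆ n : ℕ, (n : ℝ≥0∞)) * (ε / 2) := by rw [ENNReal.iSup_natCast]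
    _ = ⨆ n : ℕ, (n : ℝ≥0∞) * (ε / 2) := ENNReal.iSup_mul _ _
    _ ≤ ∫⁻ x, h x := iSup_le main

lemma midPL_real : MidPL (volume : Measure ℝ) (fun x y => (x + y) / 2) := by
  intro f g h hf hg hh hyp
  rcases eq_or_ne (∫⁻ x, f x) 0 with h0 | hf0
  · rw [h0, zero_mul]; exact zero_le
  rcases eq_or_ne (∫⁻ x, g x) 0 with h0 | hg0
  · rw [h0, mul_zero]; exact zero_le
  have hyp' : ∀ x y, g x * f y ≤ h ((x + y) / 2) ^ 2 := fun x y => by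
    rw [mul_comm, add_comm x y]; exact hyp y x
  rcases eq_or_ne (essSup f (volume : Measure ℝ)) ∞ with hMf | hMf
  · rw [midPL_real_top f g h hf hg hh hyp hMf hg0]
    exact le_top.trans_eq (ENNReal.top_pow (by norm_num)).symm
  rcases eq_or_ne (essSup g (volume : Measure ℝ)) ∞ with hMg | hMg
  · rw [midPL_real_top g f h hg hf hh hyp' hMg hf0]
    exact le_top.trans_eq (ENNReal.top_pow (by norm_num)).symm
  have hMf0 : essSup f (volume : Measure ℝ) ≠ 0 := by
    intro hcon
    exact hf0 (by rw [lintegral_congr_ae (ENNReal.essSup_eq_zero_iff.mp hcon)]; exact lintegral_zero)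
  have hMg0 : essSup g (volume : Measure ℝ) ≠ 0 := by
    intro hcon
    exact hg0 (by rw [lintegral_congr_ae (ENNReal.essSup_eq_zero_iff.mp hcon)]; exact lintegral_zero)
  set Mf := essSup f (volume : Measure ℝ) with hMfd
  set Mg := essSup g (volume : Measure ℝ) with hMgd
  set base := Mg * Mf⁻¹ with hbased
  have hbase0 : base ≠ 0 := mul_ne_zero hMg0 (ENNReal.inv_ne_zero.mpr hMf)
  have hbasetop : base ≠ ∞ := ENNReal.mul_ne_top hMg (ENNReal.inv_ne_top.mpr hMf0)
  set c := base ^ ((1:ℝ)/2) with hcd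
  have hc0 : c ≠ 0 := (ENNReal.rpow_pos (pos_iff_ne_zero.mpr hbase0) hbasetop).ne'
  have hctop : c ≠ ∞ := ENNReal.rpow_ne_top_of_nonneg (by norm_num) hbasetop
  have hc2 : c * c = base := by
    rw [hcd, ← ENNReal.rpow_add _ _ hbase0 hbasetop]
    norm_num
  set F := fun x => c * f x with hFd
  set G := fun x => c⁻¹ * g x with hGd
  have hFm : Measurable F := hf.const_mul c
  have hGm : Measurable G := hg.const_mul c⁻¹
  have hyp2 : ∀ x y, F x * G y ≤ h ((x + y) / 2) ^ 2 := by
    intro x y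
    rw [hFd, hGd]
    simp only
    rw [mul_mul_mul_comm, ENNReal.mul_inv_cancel hc0 hctop, one_mul]
    exact hyp x y
  have hsF : essSup F (volume : Measure ℝ) = c * Mf := ENNReal.essSup_const_mul
  have hsG : essSup G (volume : Measure ℝ) = c⁻¹ * Mg := ENNReal.essSup_const_mul
  have hMeq : essSup F (volume : Measure ℝ) = essSup G (volume : Measure ℝ) := by
    rw [hsF, hsG]
    have step : c * Mf = c⁻¹ * (c * (c * Mf)) := by
      rw [← mul_assoc, ENNReal.inv_mul_cancel hc0 hctop, one_mul]
    rw [step, ← mul_assoc c c, hc2, hbased, mul_assoc, ENNReal.inv_mul_cancel hMf0 hMf, mul_one]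
  have hM0 : essSup F (volume : Measure ℝ) ≠ 0 := by
    rw [hsF]; exact mul_ne_zero hc0 hMf0
  have hMt : essSup F (volume : Measure ℝ) ≠ ∞ := by
    rw [hsF]; exact ENNReal.mul_ne_top hctop hMf
  have hcore := midPL_real_core F G h hFm hGm hh hyp2 hMeq hM0 hMt
  rw [hFd, hGd] at hcore
  simp only at hcore
  rw [lintegral_const_mul c hf, lintegral_const_mul c⁻¹ hg, mul_mul_mul_comm,
    ENNReal.mul_inv_cancel hc0 hctop, one_mul] at hcore
  exact hcore

lemma MidPL.prod {α β : Type*} [MeasurableSpace α] [MeasurableSpace β]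
    {μ : Measure α} {ν : Measure β} [SFinite μ] [SFinite ν]
    {mα : α → α → α} {mβ : β → β → β}
    (hμ : MidPL μ mα) (hν : MidPL ν mβ) :
    MidPL (μ.prod ν) (fun p q => (mα p.1 q.1, mβ p.2 q.2)) := by
  intro f g h hf hg hh hyp
  set F : α → ℝ≥0∞ := fun x => ∫⁻ y, f (x, y) ∂ν with hF
  set G : α → ℝ≥0∞ := fun x => ∫⁻ y, g (x, y) ∂ν with hG
  set H : α → ℝ≥0∞ := fun x => ∫⁻ y, h (x, y) ∂ν with hH
  have hFm : Measurable F := Measurable.lintegral_prod_right (f := fun x y => f (x, y)) hf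
  have hGm : Measurable G := Measurable.lintegral_prod_right (f := fun x y => g (x, y)) hg
  have hHm : Measurable H := Measurable.lintegral_prod_right (f := fun x y => h (x, y)) hh
  have key : ∀ x₁ x₂, F x₁ * G x₂ ≤ H (mα x₁ x₂) ^ 2 := by
    intro x₁ x₂
    exact hν (fun y => f (x₁, y)) (fun y => g (x₂, y)) (fun y => h (mα x₁ x₂, y))
      (hf.comp measurable_prodMk_left) (hg.comp measurable_prodMk_left)
      (hh.comp measurable_prodMk_left) (fun y₁ y₂ => hyp (x₁, y₁) (x₂, y₂))
  have := hμ F G H hFm hGm hHm key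
  rwa [lintegral_prod _ hf.aemeasurable, lintegral_prod _ hg.aemeasurable,
    lintegral_prod _ hh.aemeasurable]

lemma MidPL.of_equiv {α β : Type*} [MeasurableSpace α] [MeasurableSpace β]
    {μ : Measure α} {ν : Measure β} (e : α ≃ᵐ β) (hp : MeasurePreserving e μ ν)
    {mα : α → α → α} {mβ : β → β → β}
    (hcomm : ∀ x y, e (mα x y) = mβ (e x) (e y)) (h : MidPL μ mα) : MidPL ν mβ := by
  intro f g hh hf hg hhm hyp
  have hf' : Measurable (f ∘ e) := hf.comp e.measurable
  have hg' : Measurable (g ∘ e) := hg.comp e.measurable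
  have hh' : Measurable (hh ∘ e) := hhm.comp e.measurable
  have := h (f ∘ e) (g ∘ e) (hh ∘ e) hf' hg' hh' (fun x y => by
    simpa [Function.comp, hcomm] using hyp (e x) (e y))
  rw [← hp.lintegral_comp hf, ← hp.lintegral_comp hg, ← hp.lintegral_comp hhm]
  simpa [Function.comp] using this

lemma insertNth_mid {m : ℕ} (i : Fin (m+1)) (γ δ : ℝ) (w v : Fin m → ℝ) :
    (fun j => ((i.insertNth γ w : Fin (m+1) → ℝ) j + (i.insertNth δ v : Fin (m+1) → ℝ) j) / 2 : Fin (m+1) → ℝ)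
      = (i.insertNth ((γ + δ) / 2) (fun j => (w j + v j) / 2) : Fin (m+1) → ℝ) := by
  funext j
  refine Fin.succAboveCases (α := fun j =>
      (((i.insertNth γ w : Fin (m+1) → ℝ) j + (i.insertNth δ v : Fin (m+1) → ℝ) j) / 2 : ℝ)
        = (i.insertNth ((γ + δ) / 2) (fun j => (w j + v j) / 2) : Fin (m+1) → ℝ) j) i ?_ (fun k => ?_) j <;>
    simp [Fin.insertNth_apply_same, Fin.insertNth_apply_succAbove]

lemma midPL_pi (m : ℕ) :
    MidPL (volume : Measure (Fin m → ℝ)) (fun x y j => (x j + y j) / 2) := by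
  induction m with
  | zero =>
    intro f g h hf hg hh hyp
    have h0 : (volume : Measure (Fin 0 → ℝ)) Set.univ = 1 := by
      simp [MeasureTheory.volume_pi, Measure.pi_univ]
    have hfc : f = fun _ => f default := funext fun x => by congr 1; exact Subsingleton.elim _ _
    have hgc : g = fun _ => g default := funext fun x => by congr 1; exact Subsingleton.elim _ _
    have hhc : h = fun _ => h default := funext fun x => by congr 1; exact Subsingleton.elim _ _
    rw [hfc, hgc, hhc, lintegral_const, lintegral_const, lintegral_const, h0]
    simpa using hyp default default
  | succ m ih =>
    refine MidPL.of_equiv (MeasurableEquiv.piFinSuccAbove (fun _ : Fin (m+1) => ℝ) 0).symm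
      ((volume_preserving_piFinSuccAbove (fun _ : Fin (m+1) => ℝ) 0).symm _)
      (mα := fun p q => ((p.1 + q.1) / 2, fun j => (p.2 j + q.2 j) / 2))
      (fun p q => ?_) (midPL_real.prod ih)
    simp only [MeasurableEquiv.piFinSuccAbove_symm_apply]
    exact (insertNth_mid 0 p.1 q.1 p.2 q.2).symm


/-- `ℝ^n` with the Euclidean structure. -/
abbrev E (n : ℕ) := EuclideanSpace ℝ (Fin n)

/-- The polar body `K° = {y : ∀ x ∈ K, ⟨x,y⟩ ≤ 1}`. -/
def polarBody {n : ℕ} (K : Set (E n)) : Set (E n) := {y | ∀ x ∈ K, ⟪x, y⟫_ℝ ≤ 1}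

/-- A set is unconditional if it is invariant under coordinate-wise sign changes. -/
def Uncond {n : ℕ} (K : Set (E n)) : Prop :=
  ∀ x ∈ K, ∀ ε : Fin n → ℝ, (∀ i, ε i = 1 ∨ ε i = -1) →
    (WithLp.toLp 2 (fun i => ε i * x i) : E n) ∈ K

/-- A convex body: compact, convex, with nonempty interior. -/
def IsConvexBody {n : ℕ} (K : Set (E n)) : Prop :=
  IsCompact K ∧ Convex ℝ K ∧ (interior K).Nonempty

/-- The Steiner symmetral of `K` in direction `u`: over each point of `u^⊥` the fiber
`K_y` is replaced by `(K_y + (-K_y))/2`. -/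
def steiner {n : ℕ} (u : E n) (K : Set (E n)) : Set (E n) :=
  {x | ∃ s t : ℝ, (x - ⟪x, u⟫_ℝ • u + s • u) ∈ K ∧ (x - ⟪x, u⟫_ℝ • u + t • u) ∈ K ∧
    ⟪x, u⟫_ℝ = (s - t) / 2}

/-- The geometric mean body `K^{1/2} L^{1/2}`. -/
def geomMean {n : ℕ} (K L : Set (E n)) : Set (E n) :=
  {z | ∃ x ∈ K, ∃ y ∈ L, ∀ i, |z i| = |x i| ^ ((1 : ℝ) / 2) * |y i| ^ ((1 : ℝ) / 2)}


lemma polar_steiner_mem {n : ℕ} {K : Set (E n)} (hsym : K = -K) {i : Fin n}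
    {u : E n} (hu : u = EuclideanSpace.single i (1:ℝ))
    {a b : E n} (ha : a ∈ polarBody K) (hb : ((2 * b i) • u - b) ∈ polarBody K)
    (hab : a i = b i) :
    (2⁻¹ : ℝ) • a + (2⁻¹ : ℝ) • b ∈ polarBody (steiner u K) := by
  intro z hz
  obtain ⟨s, t, hzs, hzt, hzi⟩ := hz
  have hmemneg : -(z - ⟪z, u⟫_ℝ • u + t • u) ∈ K := by
    rw [hsym]; exact Set.neg_mem_neg.mpr hzt
  have h1 : ⟪z - ⟪z, u⟫_ℝ • u + s • u, a⟫_ℝ ≤ 1 := ha _ hzs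
  have h2 : ⟪-(z - ⟪z, u⟫_ℝ • u + t • u), (2 * b i) • u - b⟫_ℝ ≤ 1 := hb _ hmemneg
  have huu : ⟪u, u⟫_ℝ = 1 := by
    rw [hu]; simp [EuclideanSpace.inner_single_left, EuclideanSpace.single_apply]
  have hua : ⟪u, a⟫_ℝ = a i := by rw [hu]; simp [EuclideanSpace.inner_single_left]
  have hub : ⟪u, b⟫_ℝ = b i := by rw [hu]; simp [EuclideanSpace.inner_single_left]
  simp only [inner_add_left, inner_sub_left, inner_neg_left, real_inner_smul_left,
    inner_add_right, inner_sub_right, real_inner_smul_right, huu, hua, hub] at h1 h2 ⊢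
  rw [hab] at h1
  rw [hzi] at h1 h2
  linarith [h1, h2]

lemma polarBody_isClosed {n : ℕ} (A : Set (E n)) : IsClosed (polarBody A) := by
  have : polarBody A = ⋂ x ∈ A, {y : E n | ⟪x, y⟫_ℝ ≤ 1} := by
    ext y; simp [polarBody]
  rw [this]
  exact isClosed_biInter fun x _ =>
    isClosed_le (Continuous.inner continuous_const continuous_id) continuous_const

theorem blaschke_santalo_stmt (n : ℕ) (f : E n → ℝ) (hfm : Measurable f) (hf0 : ∀ x, 0 ≤ f x)
    (hflc : ∀ x y : E n, ∀ t : ℝ, t ∈ Set.Icc (0 : ℝ) 1 →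
      f x ^ (1 - t) * f y ^ t ≤ f ((1 - t) • x + t • y))
    (hfu : ∀ (x : E n) (ε : Fin n → ℝ), (∀ i, ε i = 1 ∨ ε i = -1) →
      f (WithLp.toLp 2 (fun i => ε i * x i) : E n) = f x)
    (μ : Measure (E n)) (hμ : μ = volume.withDensity fun x => ENNReal.ofReal (f x))
    (K : Set (E n)) (hK : IsConvexBody K) (hsym : K = -K)
    (i : Fin n) (u : E n) (hu : u = EuclideanSpace.single i (1 : ℝ)) :
    μ (polarBody K) ≤ μ (polarBody (steiner u K)) := by
  obtain ⟨m, rfl⟩ : ∃ m, n = m + 1 := ⟨n - 1, (Nat.succ_pred_eq_of_pos i.pos).symm⟩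
  subst hμ
  set dens : E (m+1) → ℝ≥0∞ := fun x => ENNReal.ofReal (f x) with hdens
  have hdensm : Measurable dens := hfm.ennreal_ofReal
  set Θ : E (m+1) ≃ᵐ ℝ × (Fin m → ℝ) :=
    (MeasurableEquiv.toLp 2 (Fin (m+1) → ℝ)).symm.trans
      (MeasurableEquiv.piFinSuccAbove (fun _ => ℝ) i) with hΘdef
  have hΘ : MeasurePreserving Θ volume volume :=
    (volume_preserving_piFinSuccAbove (fun _ => ℝ) i).comp
      (EuclideanSpace.volume_preserving_symm_measurableEquiv_toLp (Fin (m+1)))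
  set e : ℝ → (Fin m → ℝ) → E (m+1) := fun γ w => Θ.symm (γ, w) with he
  have hecoord : ∀ (γ : ℝ) (w : Fin m → ℝ) (j : Fin (m+1)),
      e γ w j = (Fin.insertNth i γ w : Fin (m+1) → ℝ) j := fun _ _ _ => rfl
  have hem : ∀ γ : ℝ, Measurable (e γ) := fun γ =>
    Θ.symm.measurable.comp measurable_prodMk_left
  have hKp : MeasurableSet (polarBody K) := (polarBody_isClosed K).measurableSet
  have hSp : MeasurableSet (polarBody (steiner u K)) :=
    (polarBody_isClosed (steiner u K)).measurableSet
  have fub : ∀ A : Set (E (m+1)), MeasurableSet A →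
      volume.withDensity dens A = ∫⁻ γ, ∫⁻ w, A.indicator dens (e γ w) := by
    intro A hA
    have hindm : Measurable (A.indicator dens) := hdensm.indicator hA
    rw [withDensity_apply _ hA, ← lintegral_indicator hA,
      ← (hΘ.symm Θ).lintegral_comp hindm, Measure.volume_eq_prod,
      lintegral_prod (fun p => A.indicator dens (Θ.symm p))
        (Measurable.aemeasurable (by exact hindm.comp Θ.symm.measurable))]
  rw [fub _ hKp, fub _ hSp]
  apply lintegral_mono
  intro γ
  -- the fiber inequality via Prékopa–Leindler
  set P : (Fin m → ℝ) → ℝ≥0∞ := fun w => (polarBody K).indicator dens (e γ w) with hP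
  set Q : (Fin m → ℝ) → ℝ≥0∞ := fun w => P (-w) with hQ
  set H : (Fin m → ℝ) → ℝ≥0∞ :=
    fun w => (polarBody (steiner u K)).indicator dens (e γ w) with hH
  have hPm : Measurable P := (hdensm.indicator hKp).comp (hem γ)
  have hQm : Measurable Q := hPm.comp measurable_neg
  have hHm : Measurable H := (hdensm.indicator hSp).comp (hem γ)
  have hai : ∀ w : Fin m → ℝ, (e γ w) i = γ := by
    intro w; rw [hecoord]; simp [Fin.insertNth_apply_same]
  have hyppl : ∀ w₁ w₂, P w₁ * Q w₂ ≤ H (fun j => (w₁ j + w₂ j) / 2) ^ 2 := by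
    intro w₁ w₂
    by_cases h1 : e γ w₁ ∈ polarBody K
    swap
    · rw [hP]; simp only [Set.indicator_of_notMem h1, zero_mul]; exact zero_le
    by_cases h2 : e γ (-w₂) ∈ polarBody K
    swap
    · rw [hQ, hP]; simp only [Set.indicator_of_notMem h2, mul_zero]; exact zero_le
    -- midpoint identity
    have hmid : e γ (fun j => (w₁ j + w₂ j) / 2)
        = (2⁻¹ : ℝ) • (e γ w₁) + (2⁻¹ : ℝ) • (e γ w₂) := by
      ext j
      have hins := congrFun (insertNth_mid i γ γ w₁ w₂) j
      have hγγ : (γ + γ) / 2 = γ := by ring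
      rw [hγγ] at hins
      have hLHS : e γ (fun j => (w₁ j + w₂ j) / 2) j
          = (Fin.insertNth i γ (fun j => (w₁ j + w₂ j) / 2) : Fin (m+1) → ℝ) j :=
        hecoord _ _ _
      have hRHS : ((2⁻¹ : ℝ) • (e γ w₁) + (2⁻¹ : ℝ) • (e γ w₂)) j
          = 2⁻¹ * e γ w₁ j + 2⁻¹ * e γ w₂ j := by
        simp [PiLp.add_apply, PiLp.smul_apply, smul_eq_mul]
      rw [hLHS, hRHS, ← hins, hecoord, hecoord]
      ring
    -- the reflected point
    have hbvec : ((2 * (e γ w₂) i) • u - e γ w₂) = e γ (-w₂) := by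
      ext j
      have hsub : ((2 * (e γ w₂) i) • u - e γ w₂) j
          = 2 * (e γ w₂) i * u j - e γ w₂ j := by
        simp [PiLp.sub_apply, PiLp.smul_apply, smul_eq_mul]
      rw [hsub, hai w₂, hu]
      refine Fin.succAboveCases (α := fun j => 2 * γ * (EuclideanSpace.single i (1:ℝ)) j
        - e γ w₂ j = e γ (-w₂) j) i ?_ (fun k => ?_) j
      · beta_reduce
        rw [hecoord, hecoord]
        simp [EuclideanSpace.single_apply, Fin.insertNth_apply_same]
        ring
      · beta_reduce
        rw [hecoord, hecoord]
        have hne : i.succAbove k ≠ i := Fin.succAbove_ne i k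
        simp [EuclideanSpace.single_apply, Fin.insertNth_apply_succAbove, hne]
    -- evenness of the density in the fiber
    have hfeven : f (e γ (-w₂)) = f (e γ w₂) := by
      set ε : Fin (m+1) → ℝ := fun j => if j = i then 1 else -1 with hε
      have hεpm : ∀ j, ε j = 1 ∨ ε j = -1 := by
        intro j; simp only [hε]; split_ifs <;> simp
      have hεeq : (WithLp.toLp 2 (fun j => ε j * (e γ w₂) j) : E (m+1)) = e γ (-w₂) := by
        ext j
        refine Fin.succAboveCases (α := fun j => ε j * e γ w₂ j = e γ (-w₂) j)
          i ?_ (fun k => ?_) j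
        · beta_reduce
          rw [hecoord, hecoord]
          have : ε i = 1 := by simp [hε]
          rw [this]
          simp [Fin.insertNth_apply_same]
        · beta_reduce
          rw [hecoord, hecoord]
          have hne : i.succAbove k ≠ i := Fin.succAbove_ne i k
          have : ε (i.succAbove k) = -1 := by simp [hε, hne]
          rw [this]
          simp [Fin.insertNth_apply_succAbove, hne]
      rw [← hεeq, hfu (e γ w₂) ε hεpm]
    -- membership of the midpoint in the polar of the Steiner symmetral
    have hmem : e γ (fun j => (w₁ j + w₂ j) / 2) ∈ polarBody (steiner u K) := by
      rw [hmid]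
      exact polar_steiner_mem hsym hu h1 (hbvec ▸ h2) (by rw [hai w₁, hai w₂])
    -- the density inequality
    show P w₁ * P (-w₂) ≤ H (fun j => (w₁ j + w₂ j) / 2) ^ 2
    rw [hP, hH]
    simp only [Set.indicator_of_mem h1, Set.indicator_of_mem h2, Set.indicator_of_mem hmem]
    rw [hdens]
    simp only
    rw [hfeven, ← ENNReal.ofReal_mul (hf0 _), ← ENNReal.ofReal_pow (hf0 _)]
    apply ENNReal.ofReal_le_ofReal
    have hprod := hflc (e γ w₁) (e γ w₂) (1/2) ⟨by norm_num, by norm_num⟩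
    rw [show (1 : ℝ) - 1/2 = 2⁻¹ by norm_num, show (1 : ℝ)/2 = 2⁻¹ by norm_num, ← hmid] at hprod
    have hA0 : 0 ≤ f (e γ w₁) ^ (2⁻¹ : ℝ) * f (e γ w₂) ^ (2⁻¹ : ℝ) :=
      mul_nonneg (Real.rpow_nonneg (hf0 _) _) (Real.rpow_nonneg (hf0 _) _)
    calc f (e γ w₁) * f (e γ w₂)
        = (f (e γ w₁) ^ (2⁻¹ : ℝ) * f (e γ w₂) ^ (2⁻¹ : ℝ)) ^ 2 := by
          rw [mul_pow, ← Real.rpow_natCast (f (e γ w₁) ^ (2⁻¹ : ℝ)) 2,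
            ← Real.rpow_natCast (f (e γ w₂) ^ (2⁻¹ : ℝ)) 2,
            ← Real.rpow_mul (hf0 _), ← Real.rpow_mul (hf0 _)]
          norm_num
      _ ≤ f (e γ (fun j => (w₁ j + w₂ j) / 2)) ^ 2 := pow_le_pow_left₀ hA0 hprod 2
  have hpl := midPL_pi m P Q H hPm hQm hHm hyppl
  have hQint : ∫⁻ w, Q w = ∫⁻ w, P w :=
    (Measure.measurePreserving_neg (volume : Measure (Fin m → ℝ))).lintegral_comp hPm
  rw [hQint] at hpl
  show ∫⁻ w, P w ≤ ∫⁻ w, H w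
  by_contra hcon
  push_neg at hcon
  have hlt : (∫⁻ w, H w) * (∫⁻ w, H w) < (∫⁻ w, P w) * (∫⁻ w, P w) :=
    ENNReal.mul_lt_mul hcon hcon
  rw [pow_two] at hpl
  exact absurd (lt_of_lt_of_le hlt hpl) (lt_irrefl _)
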